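/- Let G = (V,E) be a connected weighted graph with n ≥ B+2 vertices. Define a sequence c_1, ..., c_{B+1} greedily: c_1 is arbitrary, and for i ≥ 2, c_i maximizes dist_G(c_i, {c_1,...,c_{i-1}}). Let C = {c_1,...,c_{B+1}}. Then for every vertex v of G, dist_G(v, C) ≤ D^B_opt, where D^B_opt is the minimum diameter over all B-augmentations of G. -/

import Mathlib

open scoped ENNReal

noncomputable def walkWeight {V : Type*} {G : SimpleGraph V} (w : V → V → ℝ≥0∞) {u v : V}
    (p : G.Walk u v) : ℝ≥0∞ :=
  (p.darts.map fun d => w d.toProd.1 d.toProd.2).sum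

noncomputable def wdist {V : Type*} (G : SimpleGraph V) (w : V → V → ℝ≥0∞) (u v : V) : ℝ≥0∞ :=
  ⨅ p : G.Walk u v, walkWeight w p

noncomputable def wdiam {V : Type*} (G : SimpleGraph V) (w : V → V → ℝ≥0∞) : ℝ≥0∞ :=
  ⨆ x, ⨆ y, wdist G w x y

def IsAug {V : Type*} (G : SimpleGraph V) (cst : Sym2 V → ℕ) (B : ℕ)
    (G' : SimpleGraph V) : Prop :=
  ∃ F : Finset (Sym2 V), (∀ e ∈ F, e ∉ G.edgeSet ∧ ¬ e.IsDiag) ∧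
    (∑ e ∈ F, cst e) ≤ B ∧ G' = G ⊔ SimpleGraph.fromEdgeSet ↑F

section Aux

variable {V : Type*}

/-- A pseudometric with values in `ℝ≥0∞`. -/
structure IsPM (d : V → V → ℝ≥0∞) : Prop where
  refl : ∀ x, d x x = 0
  symm : ∀ x y, d x y = d y x
  tri : ∀ x y z, d x z ≤ d x y + d y z

/-- Augment a pseudometric by a single shortcut edge. -/
noncomputable def onestep (w : V → V → ℝ≥0∞) (e : V × V) (d : V → V → ℝ≥0∞) :
    V → V → ℝ≥0∞ := fun u v =>
  min (d u v) (min (d u e.1 + w e.1 e.2 + d e.2 v) (d u e.2 + w e.1 e.2 + d e.1 v))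

/-- Augment a pseudometric by a list of shortcut edges. -/
noncomputable def aug (w : V → V → ℝ≥0∞) (d : V → V → ℝ≥0∞) :
    List (V × V) → V → V → ℝ≥0∞
  | [] => d
  | e :: L => onestep w e (aug w d L)

lemma onestep_le (w : V → V → ℝ≥0∞) (e : V × V) (d : V → V → ℝ≥0∞) (u v : V) :
    onestep w e d u v ≤ d u v := min_le_left _ _

lemma onestep_le_mid (w : V → V → ℝ≥0∞) (e : V × V) (d : V → V → ℝ≥0∞) (u v : V) :
    onestep w e d u v ≤ d u e.1 + w e.1 e.2 + d e.2 v :=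
  (min_le_right _ _).trans (min_le_left _ _)

lemma onestep_le_mid' (w : V → V → ℝ≥0∞) (e : V × V) (d : V → V → ℝ≥0∞) (u v : V) :
    onestep w e d u v ≤ d u e.2 + w e.1 e.2 + d e.1 v :=
  (min_le_right _ _).trans (min_le_right _ _)

lemma onestep_pm {w : V → V → ℝ≥0∞} {e : V × V} {d : V → V → ℝ≥0∞} (hd : IsPM d) :
    IsPM (onestep w e d) := by
  obtain ⟨a, b⟩ := e
  constructor
  · intro x
    exact le_antisymm ((min_le_left _ _).trans_eq (hd.refl x)) zero_le
  · intro u v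
    have h1 : d u a + w a b + d b v = d v b + w a b + d a u := by
      rw [hd.symm u a, hd.symm b v]; ring
    have h2 : d u b + w a b + d a v = d v a + w a b + d b u := by
      rw [hd.symm u b, hd.symm a v]; ring
    simp only [onestep]
    rw [hd.symm u v, h1, h2, min_comm (d v b + w a b + d a u) (d v a + w a b + d b u)]
  · intro u y v
    have hQ := onestep_le_mid w (a, b) d u v
    have hR := onestep_le_mid' w (a, b) d u v
    have hP := onestep_le w (a, b) d u v
    simp only at hQ hR hP
    have key : ∀ X Y : ℝ≥0∞,
        (X = d u y ∨ X = d u a + w a b + d b y ∨ X = d u b + w a b + d a y) →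
        (Y = d y v ∨ Y = d y a + w a b + d b v ∨ Y = d y b + w a b + d a v) →
        onestep w (a, b) d u v ≤ X + Y := by
      rintro X Y (rfl | rfl | rfl) (rfl | rfl | rfl)
      · exact hP.trans (hd.tri u y v)
      · refine hQ.trans ?_
        calc d u a + w a b + d b v ≤ (d u y + d y a) + w a b + d b v := by
              gcongr; exact hd.tri u y a
          _ = d u y + (d y a + w a b + d b v) := by ring
      · refine hR.trans ?_
        calc d u b + w a b + d a v ≤ (d u y + d y b) + w a b + d a v := by
              gcongr; exact hd.tri u y b
          _ = d u y + (d y b + w a b + d a v) := by ring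
      · refine hQ.trans ?_
        calc d u a + w a b + d b v ≤ d u a + w a b + (d b y + d y v) := by
              gcongr; exact hd.tri b y v
          _ = (d u a + w a b + d b y) + d y v := by ring
      · refine hQ.trans ?_
        refine (self_le_add_right _ (d b y + d y a + w a b)).trans_eq ?_
        ring
      · refine (hP.trans (hd.tri u a v)).trans ?_
        refine (self_le_add_right _ (w a b + d b y + d y b + w a b)).trans_eq ?_
        ring
      · refine hR.trans ?_
        calc d u b + w a b + d a v ≤ d u b + w a b + (d a y + d y v) := by
              gcongr; exact hd.tri a y v
          _ = (d u b + w a b + d a y) + d y v := by ring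
      · refine (hP.trans (hd.tri u b v)).trans ?_
        refine (self_le_add_right _ (w a b + d a y + d y a + w a b)).trans_eq ?_
        ring
      · refine hR.trans ?_
        refine (self_le_add_right _ (d a y + d y b + w a b)).trans_eq ?_
        ring
    have c1 : onestep w (a, b) d u y = d u y ∨
        onestep w (a, b) d u y = d u a + w a b + d b y ∨
        onestep w (a, b) d u y = d u b + w a b + d a y := by
      simp only [onestep]
      rcases min_cases (d u y) (min (d u a + w a b + d b y) (d u b + w a b + d a y)) with
        ⟨h, -⟩ | ⟨h, -⟩
      · exact Or.inl h
      · rcases min_cases (d u a + w a b + d b y) (d u b + w a b + d a y) with ⟨h2, -⟩ | ⟨h2, -⟩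
        · exact Or.inr (Or.inl (h.trans h2))
        · exact Or.inr (Or.inr (h.trans h2))
    have c2 : onestep w (a, b) d y v = d y v ∨
        onestep w (a, b) d y v = d y a + w a b + d b v ∨
        onestep w (a, b) d y v = d y b + w a b + d a v := by
      simp only [onestep]
      rcases min_cases (d y v) (min (d y a + w a b + d b v) (d y b + w a b + d a v)) with
        ⟨h, -⟩ | ⟨h, -⟩
      · exact Or.inl h
      · rcases min_cases (d y a + w a b + d b v) (d y b + w a b + d a v) with ⟨h2, -⟩ | ⟨h2, -⟩
        · exact Or.inr (Or.inl (h.trans h2))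
        · exact Or.inr (Or.inr (h.trans h2))
    exact key _ _ c1 c2

lemma aug_pm {w : V → V → ℝ≥0∞} {d : V → V → ℝ≥0∞} (hd : IsPM d) (L : List (V × V)) :
    IsPM (aug w d L) := by
  induction L with
  | nil => exact hd
  | cons e L ih => exact onestep_pm ih

lemma aug_le (w : V → V → ℝ≥0∞) (d : V → V → ℝ≥0∞) (L : List (V × V)) (u v : V) :
    aug w d L u v ≤ d u v := by
  induction L with
  | nil => exact le_rfl
  | cons e L ih => exact (onestep_le _ _ _ _ _).trans ih

lemma aug_pair {w : V → V → ℝ≥0∞} {d : V → V → ℝ≥0∞} (hd : IsPM d) {L : List (V × V)}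
    {e : V × V} (he : e ∈ L) :
    aug w d L e.1 e.2 ≤ w e.1 e.2 ∧ aug w d L e.2 e.1 ≤ w e.1 e.2 := by
  induction L with
  | nil => exact absurd he List.not_mem_nil
  | cons f L ih =>
    rcases List.mem_cons.mp he with rfl | he'
    · have hpm : IsPM (aug w d L) := aug_pm hd L
      constructor
      · refine (onestep_le_mid w e (aug w d L) e.1 e.2).trans_eq ?_
        rw [hpm.refl, hpm.refl]; simp
      · refine (onestep_le_mid' w e (aug w d L) e.2 e.1).trans_eq ?_
        rw [hpm.refl, hpm.refl]; simp
    · exact ⟨(onestep_le _ _ _ _ _).trans (ih he').1,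
        (onestep_le _ _ _ _ _).trans (ih he').2⟩

/-- Star-cover lemma: the pairs of points (pairwise `r`-far in `d`) brought within
distance `< r` by the shortcuts in `L` are covered by at most `L.length` indices. -/
lemma star_cover {ι : Type*} [DecidableEq ι] (w : V → V → ℝ≥0∞) (r : ℝ≥0∞)
    (d : V → V → ℝ≥0∞) (hd : IsPM d) (x : ι → V)
    (hx : ∀ i j, i ≠ j → r ≤ d (x i) (x j)) (L : List (V × V)) :
    ∃ Z : Finset ι, Z.card ≤ L.length ∧
      ∀ i j, i ≠ j → aug w d L (x i) (x j) < r → i ∈ Z ∨ j ∈ Z := by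
  induction L with
  | nil =>
    exact ⟨∅, le_rfl, fun i j hij hlt => absurd (hx i j hij) (not_le.mpr hlt)⟩
  | cons e L ih =>
    obtain ⟨Z, hZc, hZ⟩ := ih
    set d' := aug w d L with hd'def
    have hpm : IsPM d' := aug_pm hd L
    obtain ⟨a, b⟩ := e
    set W := w a b with hW
    set A : ι → ι → Prop := fun i j => d' (x i) a + W + d' b (x j) < r with hA
    have key : ∀ i j p q, i ∉ Z → j ∉ Z → A i j → p ∉ Z → q ∉ Z → A p q →
        i = p ∨ j = q := by
      intro i j p q hiZ hjZ hAij hpZ hqZ hApq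
      by_contra hc
      push_neg at hc
      obtain ⟨hip, hjq⟩ := hc
      have hjq' : r ≤ d' (x j) (x q) := by
        by_contra hlt
        push_neg at hlt
        rcases hZ j q hjq hlt with h | h
        · exact hjZ h
        · exact hqZ h
      have hsum : (d' (x i) a + W + d' b (x j)) + (d' (x p) a + W + d' b (x q)) < r + r :=
        ENNReal.add_lt_add hAij hApq
      have hge : d' (x i) (x p) + r ≤
          (d' (x i) a + W + d' b (x j)) + (d' (x p) a + W + d' b (x q)) := by
        have t1 : d' (x i) (x p) ≤ d' (x i) a + d' (x p) a := by
          rw [hpm.symm (x p) a]; exact hpm.tri _ _ _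
        have t2 : r ≤ d' b (x j) + d' b (x q) := by
          refine hjq'.trans ?_
          rw [hpm.symm b (x j)]; exact hpm.tri _ _ _
        calc d' (x i) (x p) + r ≤ (d' (x i) a + d' (x p) a) + (d' b (x j) + d' b (x q)) :=
              add_le_add t1 t2
          _ ≤ (d' (x i) a + d' (x p) a) + (d' b (x j) + d' b (x q)) + (W + W) :=
              self_le_add_right _ _
          _ = (d' (x i) a + W + d' b (x j)) + (d' (x p) a + W + d' b (x q)) := by ring
      have hlt2 : d' (x i) (x p) + r < r + r := hge.trans_lt hsum
      have hfin : d' (x i) (x p) < r := by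
        rcases eq_or_ne r ⊤ with rfl | hr
        · simp at hlt2
        · rw [add_comm r r] at hlt2
          exact (ENNReal.add_lt_add_iff_right hr).mp hlt2
      rcases hZ i p hip hfin with h | h
      · exact hiZ h
      · exact hpZ h
    have hswap : ∀ i j : ι, d' (x i) b + W + d' a (x j) = d' (x j) a + W + d' b (x i) := by
      intro i j
      rw [hpm.symm (x i) b, hpm.symm a (x j)]; ring
    -- decompose closeness in `aug (e :: L)`
    have hdec : ∀ i j : ι, aug w d ((a, b) :: L) (x i) (x j) < r →
        d' (x i) (x j) < r ∨ A i j ∨ A j i := by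
      intro i j h
      simp only [aug, onestep, ← hd'def, min_lt_iff] at h
      rcases h with h | h | h
      · exact Or.inl h
      · exact Or.inr (Or.inl h)
      · refine Or.inr (Or.inr ?_)
        have h' : d' (x i) b + W + d' a (x j) < r := h
        rw [hswap i j] at h'
        exact h'
    by_cases hS : ∃ i j, i ∉ Z ∧ j ∉ Z ∧ A i j
    · obtain ⟨i0, j0, hi0, hj0, hA0⟩ := hS
      -- find the common vertex of all stray pairs
      have hcommon : ∃ z : ι, ∀ s t, s ∉ Z → t ∉ Z → A s t → s = z ∨ t = z := by
        by_cases hT : ∀ p q, p ∉ Z → q ∉ Z → A p q → p = i0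
        · exact ⟨i0, fun s t hs ht hst => Or.inl (hT s t hs ht hst)⟩
        · push_neg at hT
          obtain ⟨p, q, hpZ, hqZ, hApq, hpi0⟩ := hT
          have h0 := key i0 j0 p q hi0 hj0 hA0 hpZ hqZ hApq
          have hq0 : j0 = q := by
            rcases h0 with h | h
            · exact absurd h.symm hpi0
            · exact h
          refine ⟨j0, fun s t hs ht hst => ?_⟩
          rcases key s t i0 j0 hs ht hst hi0 hj0 hA0 with h | h
          · rcases key s t p q hs ht hst hpZ hqZ hApq with h' | h'
            · exact absurd (h.symm.trans h').symm hpi0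
            · exact Or.inr (h'.trans hq0.symm)
          · exact Or.inr h
      obtain ⟨z, hz⟩ := hcommon
      refine ⟨insert z Z, ?_, ?_⟩
      · exact (Finset.card_insert_le _ _).trans (by simpa using Nat.add_le_add_right hZc 1)
      · intro i j hij hlt
        rcases hdec i j hlt with h | h | h
        · rcases hZ i j hij h with h' | h'
          · exact Or.inl (Finset.mem_insert_of_mem h')
          · exact Or.inr (Finset.mem_insert_of_mem h')
        · by_cases hiZ : i ∈ Z
          · exact Or.inl (Finset.mem_insert_of_mem hiZ)
          by_cases hjZ : j ∈ Z
          · exact Or.inr (Finset.mem_insert_of_mem hjZ)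
          rcases hz i j hiZ hjZ h with rfl | rfl
          · exact Or.inl (Finset.mem_insert_self _ _)
          · exact Or.inr (Finset.mem_insert_self _ _)
        · by_cases hiZ : i ∈ Z
          · exact Or.inl (Finset.mem_insert_of_mem hiZ)
          by_cases hjZ : j ∈ Z
          · exact Or.inr (Finset.mem_insert_of_mem hjZ)
          rcases hz j i hjZ hiZ h with rfl | rfl
          · exact Or.inr (Finset.mem_insert_self _ _)
          · exact Or.inl (Finset.mem_insert_self _ _)
    · push_neg at hS
      refine ⟨Z, hZc.trans (Nat.le_succ _), ?_⟩
      intro i j hij hlt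
      rcases hdec i j hlt with h | h | h
      · exact hZ i j hij h
      · by_cases hiZ : i ∈ Z
        · exact Or.inl hiZ
        by_cases hjZ : j ∈ Z
        · exact Or.inr hjZ
        exact absurd h (hS i j hiZ hjZ)
      · by_cases hiZ : i ∈ Z
        · exact Or.inl hiZ
        by_cases hjZ : j ∈ Z
        · exact Or.inr hjZ
        exact absurd h (hS j i hjZ hiZ)

lemma exists_far_pair (w : V → V → ℝ≥0∞) (r : ℝ≥0∞) (d : V → V → ℝ≥0∞) (hd : IsPM d)
    (L : List (V × V)) (n : ℕ) (hn : L.length + 2 ≤ n) (x : Fin n → V)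
    (hx : ∀ i j, i ≠ j → r ≤ d (x i) (x j)) :
    ∃ i j : Fin n, i ≠ j ∧ r ≤ aug w d L (x i) (x j) := by
  obtain ⟨Z, hZc, hZ⟩ := star_cover w r d hd x hx L
  have hlt : 1 < Zᶜ.card := by
    have h := Finset.card_compl Z
    rw [Fintype.card_fin] at h
    omega
  obtain ⟨i, hi, j, hj, hij⟩ := Finset.one_lt_card.mp hlt
  refine ⟨i, j, hij, not_lt.mp fun hl => ?_⟩
  rcases hZ i j hij hl with h | h
  · exact (Finset.mem_compl.mp hi) h
  · exact (Finset.mem_compl.mp hj) h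

-- basic walk weight lemmas

lemma walkWeight_nil {G : SimpleGraph V} (w : V → V → ℝ≥0∞) {u : V} :
    walkWeight w (SimpleGraph.Walk.nil : G.Walk u u) = 0 := by
  simp [walkWeight]

lemma walkWeight_cons {G : SimpleGraph V} (w : V → V → ℝ≥0∞) {u v y : V}
    (h : G.Adj u y) (p : G.Walk y v) :
    walkWeight w (SimpleGraph.Walk.cons h p) = w u y + walkWeight w p := by
  simp [walkWeight]

lemma walkWeight_append {G : SimpleGraph V} (w : V → V → ℝ≥0∞) {u v y : V}
    (p : G.Walk u y) (q : G.Walk y v) :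
    walkWeight w (p.append q) = walkWeight w p + walkWeight w q := by
  simp [walkWeight, SimpleGraph.Walk.darts_append]

lemma walkWeight_reverse {G : SimpleGraph V} (w : V → V → ℝ≥0∞) (hw : ∀ x y, w x y = w y x)
    {u v : V} (p : G.Walk u v) :
    walkWeight w p.reverse = walkWeight w p := by
  unfold walkWeight
  rw [SimpleGraph.Walk.darts_reverse, List.map_reverse, List.sum_reverse, List.map_map]
  congr 1
  refine List.map_congr_left fun d _ => ?_
  simp [hw d.toProd.1 d.toProd.2]

lemma wdist_self (G : SimpleGraph V) (w : V → V → ℝ≥0∞) (u : V) :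
    wdist G w u u = 0 :=
  le_antisymm (iInf_le_of_le SimpleGraph.Walk.nil (walkWeight_nil w).le) zero_le

lemma wdist_symm (G : SimpleGraph V) (w : V → V → ℝ≥0∞) (hw : ∀ x y, w x y = w y x)
    (u v : V) : wdist G w u v = wdist G w v u := by
  have h : ∀ a b : V, wdist G w a b ≤ wdist G w b a := by
    intro a b
    refine le_iInf fun q => iInf_le_of_le q.reverse ?_
    rw [walkWeight_reverse w hw]
  exact le_antisymm (h u v) (h v u)

lemma wdist_tri (G : SimpleGraph V) (w : V → V → ℝ≥0∞) (u y v : V) :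
    wdist G w u v ≤ wdist G w u y + wdist G w y v := by
  have hrw : wdist G w u y + wdist G w y v =
      ⨅ p : G.Walk u y, ⨅ q : G.Walk y v, (walkWeight w p + walkWeight w q) := by
    rw [wdist, ENNReal.iInf_add]
    refine iInf_congr fun p => ?_
    rw [wdist, ENNReal.add_iInf]
  rw [hrw]
  exact le_iInf fun p => le_iInf fun q =>
    iInf_le_of_le (p.append q) (walkWeight_append w p q).le

lemma wdist_pm (G : SimpleGraph V) (w : V → V → ℝ≥0∞) (hw : ∀ x y, w x y = w y x) :
    IsPM (wdist G w) :=
  ⟨wdist_self G w, wdist_symm G w hw, wdist_tri G w⟩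

lemma wdist_le_adj (G : SimpleGraph V) (w : V → V → ℝ≥0∞) {u v : V} (h : G.Adj u v) :
    wdist G w u v ≤ w u v := by
  refine iInf_le_of_le (SimpleGraph.Walk.cons h SimpleGraph.Walk.nil) ?_
  rw [walkWeight_cons, walkWeight_nil, add_zero]

lemma aug_le_walkWeight {w : V → V → ℝ≥0∞} {d : V → V → ℝ≥0∞} (hd : IsPM d)
    {L : List (V × V)} {G' : SimpleGraph V}
    (hadj : ∀ a b, G'.Adj a b → aug w d L a b ≤ w a b) :
    ∀ {u v : V} (p : G'.Walk u v), aug w d L u v ≤ walkWeight w p := by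
  intro u v p
  induction p with
  | nil =>
    rw [walkWeight_nil]
    exact (aug_le w d L _ _).trans_eq (hd.refl _)
  | @cons u' y' v' h p ih =>
    rw [walkWeight_cons]
    exact ((aug_pm hd L).tri u' y' v').trans (add_le_add (hadj _ _ h) ih)

end Aux

/-- Greedy farthest-point clustering: `ctr 0` is arbitrary and each `ctr i` maximizes the
distance to the previously chosen centers. Then every vertex is within distance
`D^B_opt` (the optimal diameter of a `B`-augmentation) of some center. -/
theorem stmt3 {V : Type*} [Fintype V] (G : SimpleGraph V) (hconn : G.Connected)
    (w : V → V → ℝ≥0∞) (hw : ∀ x y, w x y = w y x)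
    (cst : Sym2 V → ℕ) (hcst : ∀ e, 1 ≤ cst e) (B : ℕ)
    (hn : B + 2 ≤ Fintype.card V)
    (ctr : Fin (B + 1) → V)
    (hgreedy : ∀ i : Fin (B + 1), ∀ v : V,
      (⨅ (j : Fin (B + 1)) (_ : j < i), wdist G w v (ctr j)) ≤
        ⨅ (j : Fin (B + 1)) (_ : j < i), wdist G w (ctr i) (ctr j)) :
    ∀ v : V, (⨅ i : Fin (B + 1), wdist G w v (ctr i)) ≤
      ⨅ (G' : SimpleGraph V) (_ : IsAug G cst B G'), wdiam G' w := by
  intro v0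
  set d := wdist G w with hdd
  have hpm : IsPM d := wdist_pm G w hw
  set r := ⨅ i : Fin (B + 1), d v0 (ctr i) with hrdef
  refine le_iInf fun G' => le_iInf fun hA => ?_
  obtain ⟨F, hF, hsum, rfl⟩ := hA
  set L : List (V × V) := F.toList.map Quot.out with hLdef
  have hLlen : L.length = F.card := by
    rw [hLdef, List.length_map, Finset.length_toList]
  have hFcard : F.card ≤ B := by
    calc F.card = ∑ _e ∈ F, 1 := by simp
      _ ≤ ∑ e ∈ F, cst e := Finset.sum_le_sum fun e _ => hcst e
      _ ≤ B := hsum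
  -- the B+2 points
  set x : Fin (B + 2) → V := Fin.cases v0 ctr with hxdef
  have hx0 : x 0 = v0 := rfl
  have hxs : ∀ k : Fin (B + 1), x k.succ = ctr k := fun k => by
    simp [hxdef]
  have far0 : ∀ k : Fin (B + 1), r ≤ d v0 (ctr k) := fun k => iInf_le _ k
  have farlt : ∀ k l : Fin (B + 1), l < k → r ≤ d (ctr k) (ctr l) := by
    intro k l hlk
    have h1 : r ≤ ⨅ (j : Fin (B + 1)) (_ : j < k), d v0 (ctr j) :=
      le_iInf fun j => le_iInf fun _ => iInf_le _ j
    have h2 := hgreedy k v0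
    have h3 : (⨅ (j : Fin (B + 1)) (_ : j < k), d (ctr k) (ctr j)) ≤ d (ctr k) (ctr l) :=
      iInf_le_of_le l (iInf_le _ hlk)
    exact h1.trans (h2.trans h3)
  have farcc : ∀ k l : Fin (B + 1), k ≠ l → r ≤ d (ctr k) (ctr l) := by
    intro k l hkl
    rcases lt_or_gt_of_ne hkl with h | h
    · rw [hpm.symm]
      exact farlt l k h
    · exact farlt k l h
  have hfar : ∀ i j : Fin (B + 2), i ≠ j → r ≤ d (x i) (x j) := by
    intro i j hij
    induction i using Fin.cases with
    | zero =>
      induction j using Fin.cases with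
      | zero => exact absurd rfl hij
      | succ l => rw [hx0, hxs l]; exact far0 l
    | succ k =>
      induction j using Fin.cases with
      | zero =>
        rw [hx0, hxs k, hpm.symm]
        exact far0 k
      | succ l =>
        rw [hxs k, hxs l]
        exact farcc k l fun h => hij (by rw [h])
  obtain ⟨i, j, hij, hrle⟩ := exists_far_pair w r d hpm L (B + 2) (by omega) x hfar
  have hadj : ∀ a b : V, (G ⊔ SimpleGraph.fromEdgeSet (↑F : Set (Sym2 V))).Adj a b →
      aug w d L a b ≤ w a b := by
    intro a b hab
    rcases hab with hG | hFadj
    · exact (aug_le w d L a b).trans (wdist_le_adj G w hG)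
    · rw [SimpleGraph.fromEdgeSet_adj] at hFadj
      obtain ⟨hmem, hne⟩ := hFadj
      have hmemF : s(a, b) ∈ F := hmem
      have hLmem : (s(a, b) : Sym2 V).out ∈ L :=
        List.mem_map_of_mem (f := Quot.out) (Finset.mem_toList.mpr hmemF)
      have hout : Sym2.mk (s(a, b) : Sym2 V).out.1 (s(a, b) : Sym2 V).out.2 = Sym2.mk (a, b).1 (a, b).2 := Quot.out_eq _
      rcases Sym2.mk_eq_mk_iff.mp hout with h | h
      · have h1 : (s(a, b) : Sym2 V).out.1 = a := by simp [h]
        have h2 : (s(a, b) : Sym2 V).out.2 = b := by simp [h]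
        have := (aug_pair (w := w) hpm hLmem).1
        rwa [h1, h2] at this
      · have h1 : (s(a, b) : Sym2 V).out.1 = b := by simp [h]
        have h2 : (s(a, b) : Sym2 V).out.2 = a := by simp [h]
        have := (aug_pair (w := w) hpm hLmem).2
        rw [h1, h2] at this
        exact this.trans_eq (hw b a)
  calc (⨅ i : Fin (B + 1), wdist G w v0 (ctr i)) = r := rfl
    _ ≤ aug w d L (x i) (x j) := hrle
    _ ≤ wdist (G ⊔ SimpleGraph.fromEdgeSet (↑F : Set (Sym2 V))) w (x i) (x j) :=
        le_iInf fun p => aug_le_walkWeight hpm hadj p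
    _ ≤ wdiam (G ⊔ SimpleGraph.fromEdgeSet (↑F : Set (Sym2 V))) w :=
        le_iSup₂ (f := fun a b => wdist _ w a b) (x i) (x j)
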